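/- arXiv:1401.7360 — 2 statements merged into one kernel-verified Lean document; each statement's English description precedes it below -/
import Mathlib

section
/- In the ring protocol for modular summation, party P₃'s view (Z, Z+X₁+⋯+X_{m-1} mod m) together with X_m reveals no more about (X₁,…,X_{m-1}) than the sum S=X₁+⋯+X_m does: H(X₁,…,X_{m-1} | Z, Z+X₁+⋯+X_{m-1} mod m, X_m) = H(X₁,…,X_{m-1} | S, X_m). -/
open MeasureTheory ProbabilityTheory Real Filter

/-- Shannon entropy (in bits) of a discrete random variable. -/
noncomputable def ent {Ω : Type*} [MeasurableSpace Ω] (μ : Measure Ω)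
    {S : Type*} (X : Ω → S) : ℝ :=
  (∑' s : S, Real.negMulLog (μ (X ⁻¹' {s})).toReal) / Real.log 2

lemma ent_comp {Ω : Type*} [MeasurableSpace Ω] (μ : Measure Ω)
    {S T : Type*} (W : Ω → S) (f : S → T) (hf : Function.Injective f) :
    ent μ (fun ω => f (W ω)) = ent μ W := by
  unfold ent
  congr 1
  have h1 : ∀ s : S, (fun ω => f (W ω)) ⁻¹' {f s} = W ⁻¹' {s} := by
    intro s; ext ω; simp [hf.eq_iff]
  have hsupp : Function.support (fun t => Real.negMulLog (μ ((fun ω => f (W ω)) ⁻¹' {t})).toReal) ⊆ Set.range f := by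
    intro t ht
    by_contra hr
    apply ht
    have : (fun ω => f (W ω)) ⁻¹' {t} = ∅ := by
      ext ω; simp only [Set.mem_preimage, Set.mem_singleton_iff, Set.mem_empty_iff_false, iff_false]
      intro h; exact hr ⟨W ω, h⟩
    simp [this, Real.negMulLog_zero]
  calc ∑' t : T, Real.negMulLog (μ ((fun ω => f (W ω)) ⁻¹' {t})).toReal
      = ∑' s : S, Real.negMulLog (μ ((fun ω => f (W ω)) ⁻¹' {f s})).toReal := (hf.tsum_eq hsupp).symm
    _ = ∑' s : S, Real.negMulLog (μ (W ⁻¹' {s})).toReal := by simp only [h1]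

lemma ent_pair_add {Ω : Type*} [MeasurableSpace Ω] (μ : Measure Ω) [IsProbabilityMeasure μ]
    {S T : Type*} [Fintype S] [Fintype T] [MeasurableSpace S] [MeasurableSpace T]
    [MeasurableSingletonClass S] [MeasurableSingletonClass T]
    (W : Ω → S) (V : Ω → T) (hW : Measurable W) (hV : Measurable V)
    (h : IndepFun W V μ) :
    ent μ (fun ω => (W ω, V ω)) = ent μ W + ent μ V := by
  unfold ent
  rw [← add_div]
  congr 1
  have hmul : ∀ s t, (μ ((fun ω => (W ω, V ω)) ⁻¹' {(s,t)})).toReal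
      = (μ (W ⁻¹' {s})).toReal * (μ (V ⁻¹' {t})).toReal := by
    intro s t
    have hpre : (fun ω => (W ω, V ω)) ⁻¹' {(s,t)} = W ⁻¹' {s} ∩ V ⁻¹' {t} := by
      ext ω; simp [Prod.ext_iff]
    rw [hpre, h.measure_inter_preimage_eq_mul _ _ (measurableSet_singleton _) (measurableSet_singleton _),
      ENNReal.toReal_mul]
  have hsum1 : ∑ s : S, (μ (W ⁻¹' {s})).toReal = 1 := by
    rw [← ENNReal.toReal_sum (fun a _ => measure_ne_top μ _),
      MeasureTheory.sum_measure_preimage_singleton _ (fun y _ => hW (measurableSet_singleton y))]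
    simp
  have hsum2 : ∑ t : T, (μ (V ⁻¹' {t})).toReal = 1 := by
    rw [← ENNReal.toReal_sum (fun a _ => measure_ne_top μ _),
      MeasureTheory.sum_measure_preimage_singleton _ (fun y _ => hV (measurableSet_singleton y))]
    simp
  rw [tsum_fintype, tsum_fintype, tsum_fintype, Fintype.sum_prod_type]
  have key : ∀ s t, Real.negMulLog ((μ ((fun ω => (W ω, V ω)) ⁻¹' {(s,t)})).toReal)
      = (μ (V ⁻¹' {t})).toReal * Real.negMulLog (μ (W ⁻¹' {s})).toReal
        + (μ (W ⁻¹' {s})).toReal * Real.negMulLog (μ (V ⁻¹' {t})).toReal := by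
    intro s t; rw [hmul s t]; exact Real.negMulLog_mul _ _
  simp_rw [key, Finset.sum_add_distrib, ← Finset.sum_mul, ← Finset.mul_sum, hsum2]
  rw [← Finset.sum_mul, hsum1]
  ring

/-- Conditional Shannon entropy `H(X|Y) = H(X,Y) - H(Y)`, in bits. -/
noncomputable def condEnt {Ω : Type*} [MeasurableSpace Ω] (μ : Measure Ω)
    {S T : Type*} (X : Ω → S) (Y : Ω → T) : ℝ :=
  ent μ (fun ω => (X ω, Y ω)) - ent μ Y

lemma ent_comp' {Ω : Type*} [MeasurableSpace Ω] (μ : Measure Ω)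
    {S T : Type*} (V : Ω → T) (W : Ω → S) (f : S → T) (hf : Function.Injective f)
    (h : ∀ ω, V ω = f (W ω)) : ent μ V = ent μ W := by
  rw [show V = fun ω => f (W ω) from funext h]; exact ent_comp μ W f hf

set_option maxHeartbeats 1000000 in
lemma key_lemma {Ω : Type*} [MeasurableSpace Ω] (μ : Measure Ω)
    [IsProbabilityMeasure μ] (n : ℕ)
    (X : Fin (n+1) → Ω → ZMod 2) (Z : Ω → ZMod (n+1))
    (hXmeas : ∀ i, Measurable (X i)) (hZmeas : Measurable Z)
    (hZindep : IndepFun (fun ω i => X i ω) Z μ) :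
    condEnt μ
      (fun ω => fun i : Fin n => X i.castSucc ω)
      (fun ω => (Z ω,
        Z ω + ∑ i : Fin n, (((X i.castSucc ω).val : ℕ) : ZMod (n+1)),
        X (Fin.last n) ω))
    = condEnt μ
      (fun ω => fun i : Fin n => X i.castSucc ω)
      (fun ω => (∑ i : Fin (n+1), (X i ω).val, X (Fin.last n) ω)) := by
  have hAmeas : Measurable (fun ω => fun i : Fin n => X i.castSucc ω) :=
    measurable_pi_lambda _ (fun i => hXmeas _)
  have hALmeas : Measurable (fun ω => ((fun i : Fin n => X i.castSucc ω), X (Fin.last n) ω)) :=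
    hAmeas.prodMk (hXmeas _)
  have hTmeas : Measurable (fun ω => ∑ i : Fin n, (((X i.castSucc ω).val : ℕ) : ZMod (n+1))) :=
    (measurable_of_countable
      (fun a : Fin n → ZMod 2 => ∑ i : Fin n, (((a i).val : ℕ) : ZMod (n+1)))).comp hAmeas
  have hTLmeas : Measurable (fun ω =>
      (∑ i : Fin n, (((X i.castSucc ω).val : ℕ) : ZMod (n+1)), X (Fin.last n) ω)) :=
    hTmeas.prodMk (hXmeas _)
  have indepAL : IndepFun
      (fun ω => ((fun i : Fin n => X i.castSucc ω), X (Fin.last n) ω)) Z μ := by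
    have := hZindep.comp
      (φ := fun x : Fin (n+1) → ZMod 2 => ((fun i : Fin n => x i.castSucc), x (Fin.last n)))
      (ψ := id) (measurable_of_countable _) measurable_id
    exact this
  have indepTL : IndepFun
      (fun ω => (∑ i : Fin n, (((X i.castSucc ω).val : ℕ) : ZMod (n+1)), X (Fin.last n) ω)) Z μ := by
    have := hZindep.comp
      (φ := fun x : Fin (n+1) → ZMod 2 =>
        ((∑ i : Fin n, (((x i.castSucc).val : ℕ) : ZMod (n+1))), x (Fin.last n)))
      (ψ := id) (measurable_of_countable _) measurable_id
    exact this
  -- pointwise facts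
  have hSdecomp : ∀ ω, ∑ i : Fin (n+1), (X i ω).val
      = (∑ i : Fin n, (X i.castSucc ω).val) + (X (Fin.last n) ω).val := by
    intro ω; rw [Fin.sum_univ_castSucc]
  have hAval_lt : ∀ ω, (∑ i : Fin n, (X i.castSucc ω).val) < n + 1 := by
    intro ω
    have : ∑ i : Fin n, (X i.castSucc ω).val ≤ ∑ _i : Fin n, 1 :=
      Finset.sum_le_sum (fun i _ => Nat.lt_succ_iff.mp (ZMod.val_lt _))
    simpa using Nat.lt_succ_of_le this
  have hTval : ∀ ω, (∑ i : Fin n, (((X i.castSucc ω).val : ℕ) : ZMod (n+1))).val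
      = ∑ i : Fin n, (X i.castSucc ω).val := by
    intro ω
    have h1 : (∑ i : Fin n, (((X i.castSucc ω).val : ℕ) : ZMod (n+1)))
        = (((∑ i : Fin n, (X i.castSucc ω).val : ℕ)) : ZMod (n+1)) := by
      push_cast; ring
    rw [h1, ZMod.val_cast_of_lt (hAval_lt ω)]
  -- entropy equalities
  have e1 : ent μ (fun ω => ((fun i : Fin n => X i.castSucc ω),
        (Z ω, Z ω + ∑ i : Fin n, (((X i.castSucc ω).val : ℕ) : ZMod (n+1)), X (Fin.last n) ω)))
      = ent μ (fun ω => (((fun i : Fin n => X i.castSucc ω), X (Fin.last n) ω), Z ω)) := by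
    refine ent_comp' μ _ _
      (fun p : ((Fin n → ZMod 2) × ZMod 2) × ZMod (n+1) =>
        (p.1.1, (p.2, p.2 + ∑ i : Fin n, (((p.1.1 i).val : ℕ) : ZMod (n+1)), p.1.2)))
      ?_ (fun ω => rfl)
    intro p q h
    simp only [Prod.mk.injEq] at h
    obtain ⟨h1, h2, _, h4⟩ := h
    exact Prod.ext (Prod.ext h1 h4) h2
  have e2 : ent μ (fun ω =>
        (Z ω, Z ω + ∑ i : Fin n, (((X i.castSucc ω).val : ℕ) : ZMod (n+1)), X (Fin.last n) ω))
      = ent μ (fun ω =>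
        ((∑ i : Fin n, (((X i.castSucc ω).val : ℕ) : ZMod (n+1)), X (Fin.last n) ω), Z ω)) := by
    refine ent_comp' μ _ _
      (fun p : (ZMod (n+1) × ZMod 2) × ZMod (n+1) => (p.2, p.2 + p.1.1, p.1.2)) ?_ (fun ω => rfl)
    apply Function.LeftInverse.injective
      (g := fun q : ZMod (n+1) × ZMod (n+1) × ZMod 2 => ((q.2.1 - q.1, q.2.2), q.1))
    intro p; simp
  have e3 : ent μ (fun ω => (((fun i : Fin n => X i.castSucc ω), X (Fin.last n) ω), Z ω))
      = ent μ (fun ω => ((fun i : Fin n => X i.castSucc ω), X (Fin.last n) ω)) + ent μ Z :=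
    ent_pair_add μ _ _ hALmeas hZmeas indepAL
  have e4 : ent μ (fun ω =>
        ((∑ i : Fin n, (((X i.castSucc ω).val : ℕ) : ZMod (n+1)), X (Fin.last n) ω), Z ω))
      = ent μ (fun ω => (∑ i : Fin n, (((X i.castSucc ω).val : ℕ) : ZMod (n+1)), X (Fin.last n) ω))
        + ent μ Z :=
    ent_pair_add μ _ _ hTLmeas hZmeas indepTL
  have e5 : ent μ (fun ω => ((fun i : Fin n => X i.castSucc ω),
        (∑ i : Fin (n+1), (X i ω).val, X (Fin.last n) ω)))
      = ent μ (fun ω => ((fun i : Fin n => X i.castSucc ω), X (Fin.last n) ω)) := by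
    refine ent_comp' μ _ _
      (fun p : (Fin n → ZMod 2) × ZMod 2 =>
        (p.1, ((∑ i : Fin n, (p.1 i).val) + p.2.val, p.2))) ?_ ?_
    · apply Function.LeftInverse.injective
        (g := fun q : (Fin n → ZMod 2) × ℕ × ZMod 2 => (q.1, q.2.2))
      intro p; rfl
    · intro ω
      simp only
      rw [hSdecomp ω]
  have e6 : ent μ (fun ω => (∑ i : Fin (n+1), (X i ω).val, X (Fin.last n) ω))
      = ent μ (fun ω =>
        (∑ i : Fin n, (((X i.castSucc ω).val : ℕ) : ZMod (n+1)), X (Fin.last n) ω)) := by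
    refine ent_comp' μ _ _
      (fun p : ZMod (n+1) × ZMod 2 => (p.1.val + p.2.val, p.2)) ?_ ?_
    · intro p q h
      simp only [Prod.mk.injEq] at h
      obtain ⟨h1, h2⟩ := h
      rw [h2] at h1
      exact Prod.ext (ZMod.val_injective _ (Nat.add_right_cancel h1)) h2
    · intro ω
      simp only
      rw [hSdecomp ω, hTval ω]
  simp only [condEnt]
  rw [e1, e2, e3, e4, e5, e6]
  ring

/-- In the ring protocol for modular summation, party `P₃`'s view
`(Z, Z + X₁ + ⋯ + X_{m-1} mod m)` together with `X_m` reveals no more about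
`(X₁, …, X_{m-1})` than the integer sum `S = X₁ + ⋯ + X_m` does. -/
theorem stmt_6 {Ω : Type*} [MeasurableSpace Ω] (μ : Measure Ω)
    [IsProbabilityMeasure μ] (m : ℕ) [NeZero m] (hm : 2 ≤ m)
    (X : Fin m → Ω → ZMod 2) (Z : Ω → ZMod m)
    (hXmeas : ∀ i, Measurable (X i)) (hZmeas : Measurable Z)
    (hXindep : iIndepFun X μ)
    (hZindep : IndepFun (fun ω i => X i ω) Z μ)
    (hXunif : ∀ i a, μ (X i ⁻¹' {a}) = 1/2)
    (hZunif : ∀ a, μ (Z ⁻¹' {a}) = 1/m) :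
    condEnt μ
      (fun ω => fun i : Fin (m-1) => X (Fin.castLE (Nat.sub_le m 1) i) ω)
      (fun ω => (Z ω,
        Z ω + ∑ i : Fin (m-1), (((X (Fin.castLE (Nat.sub_le m 1) i) ω).val : ℕ) : ZMod m),
        X ⟨m-1, Nat.sub_lt (by omega) one_pos⟩ ω))
    = condEnt μ
      (fun ω => fun i : Fin (m-1) => X (Fin.castLE (Nat.sub_le m 1) i) ω)
      (fun ω => (∑ i : Fin m, (X i ω).val, X ⟨m-1, Nat.sub_lt (by omega) one_pos⟩ ω)) := by
  obtain ⟨n, rfl⟩ : ∃ n, m = n + 1 := ⟨m - 1, by omega⟩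
  exact key_lemma μ n X Z hXmeas hZmeas hZindep
end

section
/- Let (Xⁿ,Yⁿ) be an i.i.d. sequence of pairs of bits with per-symbol distribution μ, and suppose any estimator (X̂ⁿ,Ŷⁿ) of (Xⁿ,Yⁿ) is a function of a message Mₙ taking at most 2^{2nH(X⊕Y)+o(n)} values. If H(X,Y) − 2H(X⊕Y) > 0, then lim inf P{(X̂ⁿ,Ŷⁿ) ≠ (Xⁿ,Yⁿ)} > 0. -/
open MeasureTheory ProbabilityTheory Real Filter Topology ENNReal

lemma integral_comp_fintype {Ω : Type*} [MeasurableSpace Ω] (μ : Measure Ω) [IsFiniteMeasure μ]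
    {S : Type*} [Fintype S] [MeasurableSpace S] [MeasurableSingletonClass S]
    (Z : Ω → S) (hZ : Measurable Z) (f : S → ℝ) :
    ∫ ω, f (Z ω) ∂μ = ∑ s, (μ (Z ⁻¹' {s})).toReal * f s := by
  have h : ∀ ω, f (Z ω) = ∑ s : S, Set.indicator (Z ⁻¹' {s}) (fun _ => f s) ω := by
    intro ω
    rw [Finset.sum_eq_single (Z ω)]
    · simp [Set.indicator_of_mem, Set.mem_preimage]
    · intro s _ hs
      apply Set.indicator_of_notMem
      simp [Ne.symm hs]
    · simp
  simp_rw [h]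
  rw [integral_finset_sum]
  · congr 1; ext s
    rw [integral_indicator_const _ (hZ (measurableSet_singleton s))]
    simp [mul_comm]; exact Or.inl rfl
  · intro s _
    exact (integrable_const _).indicator (hZ (measurableSet_singleton s))

lemma ent_eq_sum {Ω : Type*} [MeasurableSpace Ω] (μ : Measure Ω)
    {S : Type*} [Fintype S] (Z : Ω → S) :
    ent μ Z = ∑ s, (μ (Z ⁻¹' {s})).toReal *
      (if (μ (Z ⁻¹' {s})).toReal = 0 then 0 else -Real.logb 2 (μ (Z ⁻¹' {s})).toReal) := by
  rw [ent, tsum_fintype, Finset.sum_div]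
  congr 1; ext s
  set p := (μ (Z ⁻¹' {s})).toReal
  by_cases hp : p = 0
  · simp [hp, Real.negMulLog]
  · rw [if_neg hp, Real.negMulLog, Real.logb]
    field_simp

lemma ent_nonneg {Ω : Type*} [MeasurableSpace Ω] (μ : Measure Ω) [IsProbabilityMeasure μ]
    {S : Type*} (Z : Ω → S) : 0 ≤ ent μ Z := by
  apply div_nonneg _ (Real.log_nonneg (by norm_num))
  apply tsum_nonneg
  intro s
  apply Real.negMulLog_nonneg (ENNReal.toReal_nonneg)
  calc (μ (Z ⁻¹' {s})).toReal ≤ (μ Set.univ).toReal :=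
        ENNReal.toReal_mono (measure_ne_top _ _) (measure_mono (Set.subset_univ _))
    _ = 1 := by simp

lemma lln_bound {Ω : Type*} [MeasurableSpace Ω] (μ : Measure Ω) [IsProbabilityMeasure μ]
    {S : Type*} [Fintype S] [MeasurableSpace S] [MeasurableSingletonClass S]
    (Z : ℕ → Ω → S) (hZ : ∀ i, Measurable (Z i))
    (hindep : Pairwise fun i j => IndepFun (Z i) (Z j) μ)
    (hid : ∀ i, IdentDistrib (Z i) (Z 0) μ μ)
    (f : S → ℝ) {t : ℝ} (ht : t < ∫ ω, f (Z 0 ω) ∂μ) :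
    Tendsto (fun n => (μ {ω | ∑ i ∈ Finset.range n, f (Z i ω) < n * t}).toReal)
      atTop (𝓝 0) := by
  set H := ∫ ω, f (Z 0 ω) ∂μ with hH
  have hfmeas : Measurable f := measurable_of_countable f
  have hWmeas : ∀ i, Measurable fun ω => f (Z i ω) := fun i => hfmeas.comp (hZ i)
  have hint : Integrable (fun ω => f (Z 0 ω)) μ := by
    apply Integrable.mono' (integrable_const (∑ s : S, |f s|)) (hWmeas 0).aestronglyMeasurable
    refine Filter.Eventually.of_forall fun ω => ?_
    calc ‖f (Z 0 ω)‖ = |f (Z 0 ω)| := rfl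
      _ ≤ ∑ s : S, |f s| :=
        Finset.single_le_sum (fun s _ => abs_nonneg (f s)) (Finset.mem_univ (Z 0 ω))
  have hW_indep : Pairwise (Function.onFun (fun x1 x2 => IndepFun x1 x2 μ) fun i ω => f (Z i ω)) :=
    fun i j hij => (hindep hij).comp hfmeas hfmeas
  have hW_id : ∀ i, IdentDistrib (fun ω => f (Z i ω)) (fun ω => f (Z 0 ω)) μ μ :=
    fun i => (hid i).comp hfmeas
  have hlln := ProbabilityTheory.strong_law_ae (fun i ω => f (Z i ω)) hint hW_indep hW_id
  have hmeas_sum : ∀ n : ℕ, AEStronglyMeasurable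
      (fun ω => (n : ℝ)⁻¹ • ∑ i ∈ Finset.range n, f (Z i ω)) μ := by
    intro n
    apply Measurable.aestronglyMeasurable
    fun_prop
  have htim := MeasureTheory.tendstoInMeasure_of_tendsto_ae hmeas_sum hlln
  have hpos : 0 < H - t := by linarith
  have hkey := tendstoInMeasure_iff_dist.mp htim (H - t) hpos
  have hsub : ∀ n : ℕ, {ω | ∑ i ∈ Finset.range n, f (Z i ω) < n * t} ⊆
      {ω | H - t ≤ dist ((n : ℝ)⁻¹ • ∑ i ∈ Finset.range n, f (Z i ω)) H} := by
    intro n ω hω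
    simp only [Set.mem_setOf_eq] at hω ⊢
    rcases Nat.eq_zero_or_pos n with rfl | hn
    · simp at hω
    · have hn' : (0:ℝ) < n := by exact_mod_cast hn
      have : (n : ℝ)⁻¹ • ∑ i ∈ Finset.range n, f (Z i ω) < t := by
        rw [smul_eq_mul]
        rw [inv_mul_lt_iff₀ hn']
        linarith [hω]
      rw [Real.dist_eq, abs_sub_comm]
      rw [le_abs]
      left; linarith
  have hmono : ∀ n, (μ {ω | ∑ i ∈ Finset.range n, f (Z i ω) < n * t}).toReal ≤
      (μ {ω | H - t ≤ dist ((n : ℝ)⁻¹ • ∑ i ∈ Finset.range n, f (Z i ω)) H}).toReal :=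
    fun n => ENNReal.toReal_mono (measure_ne_top _ _) (measure_mono (hsub n))
  have h2 : Tendsto (fun n : ℕ => (μ {ω | H - t ≤
      dist ((n : ℝ)⁻¹ • ∑ i ∈ Finset.range n, f (Z i ω)) H}).toReal) atTop (𝓝 0) := by
    have := (ENNReal.tendsto_toReal (a := 0) (by simp)).comp hkey
    exact this
  exact squeeze_zero (fun n => ENNReal.toReal_nonneg) hmono h2

lemma union_bound {Ω : Type*} [MeasurableSpace Ω] (μ : Measure Ω) [IsProbabilityMeasure μ]
    {S : Type*} [Fintype S] [MeasurableSpace S] [MeasurableSingletonClass S]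
    (Z : ℕ → Ω → S)
    (hiid : iIndepFun Z μ)
    (hid : ∀ i, IdentDistrib (Z i) (Z 0) μ μ)
    (f : S → ℝ)
    (hf : ∀ s, μ (Z 0 ⁻¹' {s}) = 0 ∨ (μ (Z 0 ⁻¹' {s})).toReal = (2:ℝ) ^ (-(f s)))
    (t : ℝ) (n : ℕ) (k : ℕ) (g : Fin k → Fin n → S) :
    μ {ω | ∃ m, ∀ i : Fin n, Z (i : ℕ) ω = g m i} ≤
      μ {ω | ∑ i ∈ Finset.range n, f (Z i ω) < n * t}
        + k * ENNReal.ofReal ((2:ℝ) ^ (-((n:ℝ) * t))) := by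
  classical
  set B := {ω | ∑ i ∈ Finset.range n, f (Z i ω) < n * t} with hB
  set A : Fin k → Set Ω := fun m => {ω | ∀ i : Fin n, Z (i : ℕ) ω = g m i} with hA
  set bd : ℝ≥0∞ := ENNReal.ofReal ((2:ℝ) ^ (-((n:ℝ) * t))) with hbd
  have hbd_pos : (0:ℝ) < (2:ℝ) ^ (-((n:ℝ) * t)) := Real.rpow_pos_of_pos (by norm_num) _
  have hprod : ∀ m, μ (A m) = ∏ i : Fin n, μ (Z 0 ⁻¹' {g m i}) := by
    intro m
    set sets : ℕ → Set S := fun i => {s | ∀ h : i < n, s = g m ⟨i, h⟩} with hsets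
    have hAeq : A m = ⋂ i ∈ Finset.range n, Z i ⁻¹' sets i := by
      ext ω
      simp only [hA, Set.mem_setOf_eq, Set.mem_iInter, Set.mem_preimage, hsets,
        Finset.mem_range]
      constructor
      · intro h i hi hi'; exact h ⟨i, hi'⟩
      · intro h i; exact h i i.isLt i.isLt
    have h1 : μ (A m) = ∏ i ∈ Finset.range n, μ (Z i ⁻¹' sets i) := by
      rw [hAeq]
      exact (ProbabilityTheory.iIndepFun_iff_measure_inter_preimage_eq_mul.mp hiid)
        (Finset.range n) (fun i _ => (Set.toFinite _).measurableSet)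
    rw [h1, ← Fin.prod_univ_eq_prod_range (fun i => μ (Z i ⁻¹' sets i)) n]
    apply Finset.prod_congr rfl
    intro i _
    have h2 : μ (Z (i:ℕ) ⁻¹' sets i) = μ (Z 0 ⁻¹' sets i) :=
      (hid i).measure_mem_eq ((Set.toFinite _).measurableSet)
    have h3 : sets (i:ℕ) = {g m i} := by
      ext s
      simp only [hsets, Set.mem_setOf_eq, Set.mem_singleton_iff]
      exact ⟨fun h => by simpa using h i.isLt, fun h _ => by simpa using h⟩
    rw [h2, h3]
  have key : ∀ m, A m ⊆ B ∨ μ (A m) ≤ bd := by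
    intro m
    by_cases hzero : ∃ i : Fin n, μ (Z 0 ⁻¹' {g m i}) = 0
    · right
      obtain ⟨i, hi⟩ := hzero
      rw [hprod m, Finset.prod_eq_zero (Finset.mem_univ i) hi]
      exact zero_le
    · push_neg at hzero
      have hfac : ∀ i : Fin n, (μ (Z 0 ⁻¹' {g m i})).toReal = (2:ℝ) ^ (-(f (g m i))) :=
        fun i => (hf (g m i)).resolve_left (hzero i)
      have htoReal : (μ (A m)).toReal = (2:ℝ) ^ (-(∑ i : Fin n, f (g m i))) := by
        rw [hprod m, ENNReal.toReal_prod]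
        rw [← Finset.sum_neg_distrib] at *
        rw [Real.rpow_sum_of_pos (by norm_num : (0:ℝ) < 2)]
        exact Finset.prod_congr rfl fun i _ => hfac i
      by_cases hsmall : μ (A m) ≤ bd
      · right; exact hsmall
      · left
        have hfin : μ (A m) ≠ ⊤ := measure_ne_top _ _
        have hlt : (2:ℝ) ^ (-((n:ℝ) * t)) < (μ (A m)).toReal := by
          by_contra hcon
          push_neg at hcon
          exact hsmall ((ENNReal.le_ofReal_iff_toReal_le hfin hbd_pos.le).mpr hcon)
        rw [htoReal, Real.rpow_lt_rpow_left_iff (by norm_num : (1:ℝ) < 2)] at hlt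
        have hsum : ∑ i : Fin n, f (g m i) < n * t := by linarith
        intro ω hω
        simp only [hA, Set.mem_setOf_eq] at hω
        simp only [hB, Set.mem_setOf_eq]
        have : ∑ i ∈ Finset.range n, f (Z i ω) = ∑ i : Fin n, f (g m i) := by
          rw [← Fin.sum_univ_eq_sum_range (fun i => f (Z i ω)) n]
          exact Finset.sum_congr rfl fun i _ => by rw [hω i]
        rw [this]; exact hsum
  set A' : Fin k → Set Ω := fun m => if A m ⊆ B then ∅ else A m with hA'
  have hcover : {ω | ∃ m, ∀ i : Fin n, Z (i:ℕ) ω = g m i} ⊆ B ∪ ⋃ m, A' m := by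
    intro ω hω
    obtain ⟨m, hm⟩ := hω
    by_cases hmB : A m ⊆ B
    · exact Or.inl (hmB hm)
    · exact Or.inr (Set.mem_iUnion.mpr ⟨m, by rw [hA']; simp only [if_neg hmB]; exact hm⟩)
  calc μ {ω | ∃ m, ∀ i : Fin n, Z (i:ℕ) ω = g m i} ≤ μ (B ∪ ⋃ m, A' m) :=
        measure_mono hcover
    _ ≤ μ B + μ (⋃ m, A' m) := measure_union_le _ _
    _ ≤ μ B + ∑ m : Fin k, μ (A' m) := by
        gcongr
        exact measure_iUnion_fintype_le μ A'
    _ ≤ μ B + ∑ _m : Fin k, bd := by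
        gcongr with m
        rw [hA']
        by_cases hmB : A m ⊆ B
        · simp [hmB]
        · simp only [if_neg hmB]
          exact (key m).resolve_left hmB
    _ = μ B + k * bd := by
        rw [Finset.sum_const, Finset.card_univ, Fintype.card_fin, nsmul_eq_mul]

/-- Converse for the discrete memoryless setting: if `(Xⁿ,Yⁿ)` is i.i.d. with
`H(X,Y) − 2·H(X⊕Y) > 0` and any estimator of `(Xⁿ,Yⁿ)` is a function of a
message with at most `2^{2nH(X⊕Y)+o(n)}` values, then the error probability
stays bounded away from `0`. -/
theorem stmt_11 {Ω : Type*} [MeasurableSpace Ω] (μ : Measure Ω)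
    [IsProbabilityMeasure μ]
    (X Y : ℕ → Ω → ZMod 2)
    (hmeas : ∀ i, Measurable (X i) ∧ Measurable (Y i))
    (hiid : iIndepFun (fun i ω => (X i ω, Y i ω)) μ)
    (hident : ∀ i, IdentDistrib (fun ω => (X i ω, Y i ω))
      (fun ω => (X 0 ω, Y 0 ω)) μ μ)
    (K : ℕ → ℕ)
    (M : (n : ℕ) → Ω → Fin (K n))
    (est : (n : ℕ) → Fin (K n) → (Fin n → ZMod 2) × (Fin n → ZMod 2))
    (o : ℕ → ℝ) (ho : o =o[Filter.atTop] (fun n => (n : ℝ)))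
    (hK : ∀ n, (K n : ℝ) ≤
      2 ^ (2 * n * ent μ (fun ω => X 0 ω + Y 0 ω) + o n))
    (hcorr : ent μ (fun ω => (X 0 ω, Y 0 ω))
      - 2 * ent μ (fun ω => X 0 ω + Y 0 ω) > 0) :
    0 < Filter.atTop.liminf (fun n =>
      (μ {ω | est n (M n ω) ≠
        ((fun i : Fin n => X i ω), (fun i : Fin n => Y i ω))}).toReal) := by
  classical
  set Z : ℕ → Ω → ZMod 2 × ZMod 2 := fun i ω => (X i ω, Y i ω) with hZdef
  have hZmeas : ∀ i, Measurable (Z i) := fun i => (hmeas i).1.prodMk (hmeas i).2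
  set p : ZMod 2 × ZMod 2 → ℝ := fun s => (μ (Z 0 ⁻¹' {s})).toReal with hpdef
  set f : ZMod 2 × ZMod 2 → ℝ :=
    fun s => if p s = 0 then 0 else -Real.logb 2 (p s) with hfdef
  set H : ℝ := ent μ (Z 0) with hHdef
  set Hx : ℝ := ent μ (fun ω => X 0 ω + Y 0 ω) with hHxdef
  set ε : ℝ := (H - 2 * Hx) / 2 with hεdef
  have hε : 0 < ε := by
    rw [hεdef]
    have : H - 2 * Hx > 0 := hcorr
    linarith
  set t : ℝ := 2 * Hx + ε with htdef
  have hHt : t < H := by rw [htdef, hεdef]; linarith [hcorr]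
  -- integral of f ∘ Z 0 equals H
  have hint : ∫ ω, f (Z 0 ω) ∂μ = H := by
    rw [integral_comp_fintype μ (Z 0) (hZmeas 0) f, hHdef, ent_eq_sum]
  -- LLN part
  have hlln : Tendsto (fun n => (μ {ω | ∑ i ∈ Finset.range n, f (Z i ω) < n * t}).toReal)
      atTop (𝓝 0) := by
    apply lln_bound μ Z hZmeas (fun i j hij => hiid.indepFun hij) hident f
    rw [hint]; exact hHt
  -- hypothesis for union_bound
  have hf : ∀ s, μ (Z 0 ⁻¹' {s}) = 0 ∨ p s = (2:ℝ) ^ (-(f s)) := by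
    intro s
    by_cases hps : p s = 0
    · left
      have := ENNReal.toReal_eq_zero_iff (μ (Z 0 ⁻¹' {s}))
      rcases this.mp hps with h | h
      · exact h
      · exact absurd h (measure_ne_top _ _)
    · right
      have hpos : 0 < p s := lt_of_le_of_ne ENNReal.toReal_nonneg (Ne.symm hps)
      rw [hfdef]
      simp only [if_neg hps, neg_neg]
      exact (Real.rpow_logb (by norm_num) (by norm_num) hpos).symm
  -- per-n bound on probability of correct decoding
  set C : ℕ → Set Ω := fun n => {ω | est n (M n ω) =
    ((fun i : Fin n => X i ω), (fun i : Fin n => Y i ω))} with hCdef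
  have hCbound : ∀ n, (μ (C n)).toReal ≤
      (μ {ω | ∑ i ∈ Finset.range n, f (Z i ω) < n * t}).toReal
        + (K n : ℝ) * (2:ℝ) ^ (-((n:ℝ) * t)) := by
    intro n
    set g : Fin (K n) → Fin n → ZMod 2 × ZMod 2 :=
      fun m i => ((est n m).1 i, (est n m).2 i) with hgdef
    have hsub : C n ⊆ {ω | ∃ m, ∀ i : Fin n, Z (i : ℕ) ω = g m i} := by
      intro ω hω
      refine ⟨M n ω, fun i => ?_⟩
      simp only [hCdef, Set.mem_setOf_eq, Prod.ext_iff] at hω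
      simp only [hgdef, hZdef, hω.1, hω.2]
    have := union_bound μ Z hiid hident f hf t n (K n) g
    have hle : μ (C n) ≤ μ {ω | ∑ i ∈ Finset.range n, f (Z i ω) < n * t}
        + (K n) * ENNReal.ofReal ((2:ℝ) ^ (-((n:ℝ) * t))) :=
      le_trans (measure_mono hsub) this
    have hfin : μ {ω | ∑ i ∈ Finset.range n, f (Z i ω) < n * t}
        + (K n) * ENNReal.ofReal ((2:ℝ) ^ (-((n:ℝ) * t))) ≠ ⊤ := by
      apply ENNReal.add_ne_top.mpr
      constructor
      · exact measure_ne_top _ _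
      · exact ENNReal.mul_ne_top (by simp) ENNReal.ofReal_ne_top
    calc (μ (C n)).toReal ≤ (μ {ω | ∑ i ∈ Finset.range n, f (Z i ω) < n * t}
          + (K n) * ENNReal.ofReal ((2:ℝ) ^ (-((n:ℝ) * t)))).toReal :=
        ENNReal.toReal_mono hfin hle
      _ = (μ {ω | ∑ i ∈ Finset.range n, f (Z i ω) < n * t}).toReal
          + (K n : ℝ) * (2:ℝ) ^ (-((n:ℝ) * t)) := by
        rw [ENNReal.toReal_add (measure_ne_top _ _)
          (ENNReal.mul_ne_top (by simp) ENNReal.ofReal_ne_top),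
          ENNReal.toReal_mul, ENNReal.toReal_ofReal (Real.rpow_pos_of_pos two_pos _).le]
        simp
  -- the K n * 2^{-nt} term tends to 0
  have hKterm : Tendsto (fun n : ℕ => (K n : ℝ) * (2:ℝ) ^ (-((n:ℝ) * t))) atTop (𝓝 0) := by
    have hub : ∀ n : ℕ, (K n : ℝ) * (2:ℝ) ^ (-((n:ℝ) * t)) ≤
        (2:ℝ) ^ (o n - n * ε) := by
      intro n
      have h1 : (K n : ℝ) * (2:ℝ) ^ (-((n:ℝ) * t)) ≤
          (2:ℝ) ^ (2 * n * Hx + o n) * (2:ℝ) ^ (-((n:ℝ) * t)) := by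
        exact mul_le_mul_of_nonneg_right (hK n) (Real.rpow_pos_of_pos two_pos _).le
      refine h1.trans_eq ?_
      rw [← Real.rpow_add two_pos]
      congr 1
      rw [htdef]; ring
    have hexp : Tendsto (fun n : ℕ => o n - n * ε) atTop atBot := by
      have hev : ∀ᶠ n : ℕ in atTop, o n - n * ε ≤ -(ε / 2 * n) := by
        filter_upwards [ho.def (by linarith : 0 < ε / 2), eventually_ge_atTop 0] with n hn _
        have : |o n| ≤ ε / 2 * n := by
          simpa [Real.norm_eq_abs, Nat.abs_cast] using hn
        have h2 : o n ≤ ε / 2 * n := (le_abs_self _).trans this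
        nlinarith
      have h1 : Tendsto (fun n : ℕ => (ε / 2) * (n:ℝ)) atTop atTop :=
        Tendsto.const_mul_atTop (by linarith) tendsto_natCast_atTop_atTop
      exact tendsto_atBot_mono' atTop hev
        (by simpa using h1)
    have h0 : Tendsto (fun n : ℕ => (2:ℝ) ^ (o n - n * ε)) atTop (𝓝 0) :=
      (tendsto_rpow_atBot_of_base_gt_one 2 one_lt_two).comp hexp
    exact squeeze_zero
      (fun n => mul_nonneg (Nat.cast_nonneg _) (Real.rpow_pos_of_pos two_pos _).le)
      hub h0
  -- probability of correct decoding tends to 0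
  have hC0 : Tendsto (fun n => (μ (C n)).toReal) atTop (𝓝 0) := by
    apply squeeze_zero (fun n => ENNReal.toReal_nonneg) hCbound
    simpa using hlln.add hKterm
  -- error probability is eventually at least 1/2
  set e : ℕ → ℝ := fun n => (μ {ω | est n (M n ω) ≠
    ((fun i : Fin n => X i ω), (fun i : Fin n => Y i ω))}).toReal with hedef
  have hlower : ∀ n, 1 ≤ (μ (C n)).toReal + e n := by
    intro n
    have hcup : (Set.univ : Set Ω) ⊆ C n ∪ {ω | est n (M n ω) ≠
        ((fun i : Fin n => X i ω), (fun i : Fin n => Y i ω))} := by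
      intro ω _
      by_cases h : est n (M n ω) = ((fun i : Fin n => X i ω), (fun i : Fin n => Y i ω))
      · exact Or.inl h
      · exact Or.inr h
    have h1 : (1:ℝ≥0∞) ≤ μ (C n) + μ {ω | est n (M n ω) ≠
        ((fun i : Fin n => X i ω), (fun i : Fin n => Y i ω))} := by
      calc (1:ℝ≥0∞) = μ Set.univ := (measure_univ).symm
        _ ≤ μ (C n ∪ _) := measure_mono hcup
        _ ≤ _ := measure_union_le _ _
    have hfin : μ (C n) + μ {ω | est n (M n ω) ≠
        ((fun i : Fin n => X i ω), (fun i : Fin n => Y i ω))} ≠ ⊤ :=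
      ENNReal.add_ne_top.mpr ⟨measure_ne_top _ _, measure_ne_top _ _⟩
    have := ENNReal.toReal_mono hfin h1
    rwa [ENNReal.toReal_one, ENNReal.toReal_add (measure_ne_top _ _) (measure_ne_top _ _)]
      at this
  have hev : ∀ᶠ n in atTop, (1:ℝ)/2 ≤ e n := by
    have : ∀ᶠ n in atTop, (μ (C n)).toReal < 1/2 :=
      hC0.eventually (eventually_lt_nhds (by norm_num : (0:ℝ) < 1/2))
    filter_upwards [this] with n hn
    have := hlower n
    linarith
  have hbdd : IsBoundedUnder (· ≤ ·) atTop e := by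
    refine isBoundedUnder_of ⟨1, fun n => ?_⟩
    simp only [hedef]
    calc (μ _).toReal ≤ (μ Set.univ).toReal :=
        ENNReal.toReal_mono (measure_ne_top _ _) (measure_mono (Set.subset_univ _))
      _ = 1 := by simp
  calc (0:ℝ) < 1/2 := by norm_num
    _ ≤ Filter.atTop.liminf e := le_liminf_of_le hbdd.isCoboundedUnder_ge hev
end
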